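/- Let F : ((Fin n → ℝ) × ℝ) → (Fin n → ℝ) be continuously differentiable, let α ∈ ℝ, and let λ : ℝ → (Fin n → ℝ) be differentiable. For each t, let A t denote the partial Fréchet derivative of F in its first argument at (λ t, t) and ∂ₜF(λ t, t) the partial derivative of F in its second argument at (λ t, t). Assume that for every t the map A t is a continuous linear equivalence and that λ satisfies the prediction–correction dynamics deriv λ t = −(A t)⁻¹ (α • F(λ t, t) + ∂ₜF(λ t, t)). Then the residual decays exponentially: F(λ t, t) = Real.exp(−α t) • F(λ 0, 0) for all t ∈ ℝ; in particular, if α > 0 then the KKT residual F(λ t, t) tends to 0 as t → ∞. (This is the tracking property underlying the paper's dynamic system (11): the correction term drives λ(t) toward the optimum while the prediction term compensates for the time variation.) -/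

import Mathlib

/-- The tracking property of the paper's prediction–correction dynamic system (11):
if `λ` satisfies `λ̇(t) = −(A t)⁻¹ (α • F(λ(t), t) + ∂ₜF(λ(t), t))`, where `A t` is the
(invertible) partial Fréchet derivative of `F` in its first argument at `(λ(t), t)`,
then the KKT residual decays exponentially, `F(λ(t), t) = exp(−α t) • F(λ(0), 0)`;
in particular for `α > 0` the residual tends to `0` as `t → ∞`. -/
theorem prediction_correction_exponential_tracking {n : ℕ}
    (F : ((Fin n → ℝ) × ℝ) → (Fin n → ℝ)) (hF : ContDiff ℝ 1 F) (α : ℝ)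
    (lam : ℝ → (Fin n → ℝ)) (hlam : Differentiable ℝ lam)
    (A : ℝ → ((Fin n → ℝ) ≃L[ℝ] (Fin n → ℝ)))
    (hA : ∀ (t : ℝ) (v : Fin n → ℝ), A t v = fderiv ℝ F (lam t, t) (v, 0))
    (hdyn : ∀ t : ℝ, deriv lam t =
      -((A t).symm (α • F (lam t, t) + fderiv ℝ F (lam t, t) (0, 1)))) :
    (∀ t : ℝ, F (lam t, t) = Real.exp (-α * t) • F (lam 0, 0)) ∧
    (0 < α → Filter.Tendsto (fun t : ℝ => F (lam t, t)) Filter.atTop (nhds 0)) := by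
  set g : ℝ → (Fin n → ℝ) := fun t => F (lam t, t) with hg
  have hFd : Differentiable ℝ F := hF.differentiable one_ne_zero
  have hgderiv : ∀ t : ℝ, HasDerivAt g (-α • g t) t := by
    intro t
    have hc : HasDerivAt (fun s : ℝ => (lam s, s)) (deriv lam t, 1) t :=
      ((hlam t).hasDerivAt).prodMk (hasDerivAt_id t)
    have hFt : HasFDerivAt F (fderiv ℝ F (lam t, t)) (lam t, t) :=
      (hFd (lam t, t)).hasFDerivAt
    have h1 : HasDerivAt g (fderiv ℝ F (lam t, t) (deriv lam t, 1)) t := by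
      have := hFt.comp_hasDerivAt_of_eq t hc rfl
      simpa [Function.comp_def] using this
    have hsplit : fderiv ℝ F (lam t, t) (deriv lam t, 1)
        = fderiv ℝ F (lam t, t) (deriv lam t, 0) + fderiv ℝ F (lam t, t) (0, 1) := by
      rw [← ContinuousLinearMap.map_add]
      norm_num
    have hAv : fderiv ℝ F (lam t, t) (deriv lam t, 0)
        = -(α • g t + fderiv ℝ F (lam t, t) (0, 1)) := by
      rw [← hA t (deriv lam t), hdyn t, map_neg, (A t).apply_symm_apply]
    have : fderiv ℝ F (lam t, t) (deriv lam t, 1) = -α • g t := by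
      rw [hsplit, hAv]; module
    rwa [this] at h1
  have key : ∀ t : ℝ, g t = Real.exp (-α * t) • g 0 := by
    have hconst : ∀ t : ℝ, Real.exp (α * t) • g t = g 0 := by
      have hderiv0 : ∀ t : ℝ, HasDerivAt (fun s => Real.exp (α * s) • g s) 0 t := by
        intro t
        have he : HasDerivAt (fun s : ℝ => Real.exp (α * s)) (α * Real.exp (α * t)) t := by
          have := (Real.hasDerivAt_exp (α * t)).comp t
            ((hasDerivAt_id t).const_mul α)
          simpa [mul_comm, Function.comp_def] using this
        have := he.smul (hgderiv t)
        simpa [smul_smul, neg_smul, mul_comm] using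
          (show HasDerivAt (fun s => Real.exp (α * s) • g s) _ t from this)
      have hdiff : Differentiable ℝ (fun s => Real.exp (α * s) • g s) :=
        fun t => (hderiv0 t).differentiableAt
      intro t
      have := is_const_of_deriv_eq_zero (𝕜 := ℝ) hdiff
        (fun t => (hderiv0 t).deriv) t 0
      simpa using this
    intro t
    have h := hconst t
    calc g t = Real.exp (-α * t) • (Real.exp (α * t) • g t) := by
          rw [smul_smul, ← Real.exp_add]; ring_nf; simp
      _ = Real.exp (-α * t) • g 0 := by rw [h]
  refine ⟨key, fun hα => ?_⟩
  have h1 : Filter.Tendsto (fun t : ℝ => Real.exp (-α * t)) Filter.atTop (nhds 0) := by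
    apply Real.tendsto_exp_atBot.comp
    exact Filter.Tendsto.const_mul_atTop_of_neg (neg_lt_zero.mpr hα) Filter.tendsto_id
  have : Filter.Tendsto (fun t : ℝ => Real.exp (-α * t) • g 0) Filter.atTop (nhds 0) := by
    simpa using h1.smul_const (g 0)
  exact this.congr fun t => (key t).symm
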